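/- Let (Ω, F, P) be a probability space, Y an integrable real random variable, and T, T*, Z, V random variables taking values in {0,1} such that every event {T = t, T* = t*, Z = z, V = v} has positive probability. Assume: (a) E[Y | T = t, T* = t*, Z = z, V = v] = E[Y | T* = t*, Z = z, V = v] for all t, t*, z, v; (b) E[Y | T* = t*, Z = z, V = v] = E[Y | T* = t*, V = v] for all t*, z, v; (d) P(T = 1 | T* = t*, Z = z, V = v) = P(T = 1 | T* = t*, Z = z) for all t*, z, v. Then for all (z, v) ∈ {0,1}²: E[Y | Z = z, V = v] = Σ_{t* ∈ {0,1}} E[Y | T* = t*, V = v] · P(T* = t* | Z = z, V = v); E[T | Z = z, V = v] = Σ_{t* ∈ {0,1}} P(T = 1 | T* = t*, Z = z) · P(T* = t* | Z = z, V = v); and E[Y·T | Z = z, V = v] = Σ_{t* ∈ {0,1}} E[Y | T* = t*, V = v] · P(T = 1 | T* = t*, Z = z) · P(T* = t* | Z = z, V = v). -/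

import Mathlib

open MeasureTheory

/-- Conditional expectation of `X` given the event `A`: `E[X | A] = E[X · 1_A] / P(A)`. -/
noncomputable def cExp {Ω : Type*} [MeasurableSpace Ω] (P : Measure Ω)
    (X : Ω → ℝ) (A : Set Ω) : ℝ :=
  (∫ ω in A, X ω ∂P) / (P A).toReal

/-- Conditional probability of the event `B` given the event `A`: `P(B | A) = P(A ∩ B) / P(A)`. -/
noncomputable def cPr {Ω : Type*} [MeasurableSpace Ω] (P : Measure Ω)
    (B A : Set Ω) : ℝ :=
  (P (A ∩ B)).toReal / (P A).toReal

/-- Coercion of a `{0,1}`-valued (Boolean) random variable to a real number. -/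
def b2r (b : Bool) : ℝ := if b then 1 else 0

/-- **The moment-equation system** (equation "(system)" of the paper), derived from
Assumption 1(a)(b)(d): decomposition of `E[Y | Z, V]`, `E[T | Z, V]` and
`E[YT | Z, V]` as mixtures over the latent `T*` (with `1 = true`, `0 = false`). -/
theorem moment_system
    {Ω : Type*} [MeasurableSpace Ω] (P : Measure Ω) [IsProbabilityMeasure P]
    (Y : Ω → ℝ) (hYmeas : Measurable Y) (hYint : Integrable Y P)
    (T Tstar Z V : Ω → Bool)
    (hT : Measurable T) (hTstar : Measurable Tstar)
    (hZ : Measurable Z) (hV : Measurable V)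
    (hpos : ∀ t t' z v : Bool,
      0 < P {ω | T ω = t ∧ Tstar ω = t' ∧ Z ω = z ∧ V ω = v})
    -- (a): E[Y | T, T*, Z, V] = E[Y | T*, Z, V]
    (ha : ∀ t t' z v : Bool,
      cExp P Y {ω | T ω = t ∧ Tstar ω = t' ∧ Z ω = z ∧ V ω = v}
        = cExp P Y {ω | Tstar ω = t' ∧ Z ω = z ∧ V ω = v})
    -- (b): E[Y | T*, Z, V] = E[Y | T*, V]
    (hb : ∀ t' z v : Bool,
      cExp P Y {ω | Tstar ω = t' ∧ Z ω = z ∧ V ω = v}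
        = cExp P Y {ω | Tstar ω = t' ∧ V ω = v})
    -- (d): P(T = 1 | T*, Z, V) = P(T = 1 | T*, Z)
    (hd : ∀ t' z v : Bool,
      cPr P {ω | T ω = true} {ω | Tstar ω = t' ∧ Z ω = z ∧ V ω = v}
        = cPr P {ω | T ω = true} {ω | Tstar ω = t' ∧ Z ω = z}) :
    ∀ z v : Bool,
      (cExp P Y {ω | Z ω = z ∧ V ω = v}
        = ∑ t' : Bool, cExp P Y {ω | Tstar ω = t' ∧ V ω = v}
            * cPr P {ω | Tstar ω = t'} {ω | Z ω = z ∧ V ω = v}) ∧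
      (cExp P (fun ω => b2r (T ω)) {ω | Z ω = z ∧ V ω = v}
        = ∑ t' : Bool, cPr P {ω | T ω = true} {ω | Tstar ω = t' ∧ Z ω = z}
            * cPr P {ω | Tstar ω = t'} {ω | Z ω = z ∧ V ω = v}) ∧
      (cExp P (fun ω => Y ω * b2r (T ω)) {ω | Z ω = z ∧ V ω = v}
        = ∑ t' : Bool, cExp P Y {ω | Tstar ω = t' ∧ V ω = v}
            * cPr P {ω | T ω = true} {ω | Tstar ω = t' ∧ Z ω = z}
            * cPr P {ω | Tstar ω = t'} {ω | Z ω = z ∧ V ω = v}) := by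

  classical
  intro z v
  -- measurable sets
  have mTT : MeasurableSet {ω | T ω = true} := hT (measurableSet_singleton true)
  have mA : ∀ t' : Bool, MeasurableSet {ω | Tstar ω = t' ∧ Z ω = z ∧ V ω = v} := by
    intro t'
    have : {ω | Tstar ω = t' ∧ Z ω = z ∧ V ω = v}
        = Tstar ⁻¹' {t'} ∩ (Z ⁻¹' {z} ∩ V ⁻¹' {v}) := rfl
    rw [this]
    exact (hTstar (measurableSet_singleton _)).inter
      ((hZ (measurableSet_singleton _)).inter (hV (measurableSet_singleton _)))
  have mB : ∀ t' : Bool,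
      MeasurableSet {ω | T ω = true ∧ Tstar ω = t' ∧ Z ω = z ∧ V ω = v} := by
    intro t'
    have : {ω | T ω = true ∧ Tstar ω = t' ∧ Z ω = z ∧ V ω = v}
        = T ⁻¹' {true} ∩ (Tstar ⁻¹' {t'} ∩ (Z ⁻¹' {z} ∩ V ⁻¹' {v})) := rfl
    rw [this]
    exact (hT (measurableSet_singleton _)).inter
      ((hTstar (measurableSet_singleton _)).inter
        ((hZ (measurableSet_singleton _)).inter (hV (measurableSet_singleton _))))
  -- nonzero real measures
  have hne : ∀ (A : Set Ω), 0 < P A → (P A).toReal ≠ 0 := fun A h =>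
    (ENNReal.toReal_pos h.ne' (measure_ne_top P A)).ne'
  have hposA : ∀ t' : Bool, 0 < P {ω | Tstar ω = t' ∧ Z ω = z ∧ V ω = v} := by
    intro t'
    refine lt_of_lt_of_le (hpos true t' z v) (measure_mono ?_)
    intro ω h; exact h.2
  have hposB : ∀ t' : Bool,
      0 < P {ω | T ω = true ∧ Tstar ω = t' ∧ Z ω = z ∧ V ω = v} := fun t' =>
    hpos true t' z v
  have hposTV : ∀ t' : Bool, 0 < P {ω | Tstar ω = t' ∧ V ω = v} := by
    intro t'
    refine lt_of_lt_of_le (hpos true t' z v) (measure_mono ?_)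
    intro ω h; exact ⟨h.2.1, h.2.2.2⟩
  have hposTZ : ∀ t' : Bool, 0 < P {ω | Tstar ω = t' ∧ Z ω = z} := by
    intro t'
    refine lt_of_lt_of_le (hpos true t' z v) (measure_mono ?_)
    intro ω h; exact ⟨h.2.1, h.2.2.1⟩
  have hposS : 0 < P {ω | Z ω = z ∧ V ω = v} := by
    refine lt_of_lt_of_le (hpos true true z v) (measure_mono ?_)
    intro ω h; exact h.2.2
  have hpSne : ((P {ω | Z ω = z ∧ V ω = v}).toReal) ≠ 0 := hne _ hposS
  -- set identities
  have hSA : {ω | Z ω = z ∧ V ω = v}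
      = {ω | Tstar ω = true ∧ Z ω = z ∧ V ω = v}
        ∪ {ω | Tstar ω = false ∧ Z ω = z ∧ V ω = v} := by
    ext ω; cases h : Tstar ω <;> simp [Set.mem_setOf_eq, h]
  have hdisjA : Disjoint {ω | Tstar ω = true ∧ Z ω = z ∧ V ω = v}
      {ω | Tstar ω = false ∧ Z ω = z ∧ V ω = v} := by
    rw [Set.disjoint_left]
    intro ω h1 h2
    simp [Set.mem_setOf_eq] at h1 h2
    rw [h1.1] at h2; exact absurd h2.1 (by simp)
  have hdisjB : Disjoint {ω | T ω = true ∧ Tstar ω = true ∧ Z ω = z ∧ V ω = v}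
      {ω | T ω = true ∧ Tstar ω = false ∧ Z ω = z ∧ V ω = v} := by
    rw [Set.disjoint_left]
    intro ω h1 h2
    simp [Set.mem_setOf_eq] at h1 h2
    rw [h1.2.1] at h2; exact absurd h2.2.1 (by simp)
  have hScap : ∀ t' : Bool, {ω | Z ω = z ∧ V ω = v} ∩ {ω | Tstar ω = t'}
      = {ω | Tstar ω = t' ∧ Z ω = z ∧ V ω = v} := by
    intro t'; ext ω
    simp only [Set.mem_inter_iff, Set.mem_setOf_eq]
    tauto
  have hAcapT : ∀ t' : Bool,
      {ω | Tstar ω = t' ∧ Z ω = z ∧ V ω = v} ∩ {ω | T ω = true}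
      = {ω | T ω = true ∧ Tstar ω = t' ∧ Z ω = z ∧ V ω = v} := by
    intro t'; ext ω
    simp only [Set.mem_inter_iff, Set.mem_setOf_eq]
    tauto
  have hScapT : {ω | Z ω = z ∧ V ω = v} ∩ {ω | T ω = true}
      = {ω | T ω = true ∧ Tstar ω = true ∧ Z ω = z ∧ V ω = v}
        ∪ {ω | T ω = true ∧ Tstar ω = false ∧ Z ω = z ∧ V ω = v} := by
    ext ω; cases h : Tstar ω <;>
      simp [Set.mem_inter_iff, Set.mem_setOf_eq, h] <;> tauto
  -- per-t' term identities
  have hterm : ∀ t' : Bool,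
      (cExp P Y {ω | Tstar ω = t' ∧ V ω = v}
          * cPr P {ω | Tstar ω = t'} {ω | Z ω = z ∧ V ω = v}
        = (∫ ω in {ω | Tstar ω = t' ∧ Z ω = z ∧ V ω = v}, Y ω ∂P)
            / (P {ω | Z ω = z ∧ V ω = v}).toReal) ∧
      (cPr P {ω | T ω = true} {ω | Tstar ω = t' ∧ Z ω = z}
          * cPr P {ω | Tstar ω = t'} {ω | Z ω = z ∧ V ω = v}
        = (P {ω | T ω = true ∧ Tstar ω = t' ∧ Z ω = z ∧ V ω = v}).toReal
            / (P {ω | Z ω = z ∧ V ω = v}).toReal) ∧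
      (cExp P Y {ω | Tstar ω = t' ∧ V ω = v}
          * cPr P {ω | T ω = true} {ω | Tstar ω = t' ∧ Z ω = z}
          * cPr P {ω | Tstar ω = t'} {ω | Z ω = z ∧ V ω = v}
        = (∫ ω in {ω | T ω = true ∧ Tstar ω = t' ∧ Z ω = z ∧ V ω = v}, Y ω ∂P)
            / (P {ω | Z ω = z ∧ V ω = v}).toReal) := by
    intro t'
    have hpA := hne _ (hposA t')
    have hpB := hne _ (hposB t')
    have heb : cExp P Y {ω | Tstar ω = t' ∧ V ω = v}
        = (∫ ω in {ω | Tstar ω = t' ∧ Z ω = z ∧ V ω = v}, Y ω ∂P)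
            / (P {ω | Tstar ω = t' ∧ Z ω = z ∧ V ω = v}).toReal :=
      ((hb t' z v).symm : _)
    have hcPr1 : cPr P {ω | Tstar ω = t'} {ω | Z ω = z ∧ V ω = v}
        = (P {ω | Tstar ω = t' ∧ Z ω = z ∧ V ω = v}).toReal
            / (P {ω | Z ω = z ∧ V ω = v}).toReal := by
      unfold cPr; rw [hScap t']
    have hcPrd : cPr P {ω | T ω = true} {ω | Tstar ω = t' ∧ Z ω = z}
        = (P {ω | T ω = true ∧ Tstar ω = t' ∧ Z ω = z ∧ V ω = v}).toReal
            / (P {ω | Tstar ω = t' ∧ Z ω = z ∧ V ω = v}).toReal := by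
      rw [← hd t' z v]; unfold cPr; rw [hAcapT t']
    have hintB : (∫ ω in {ω | T ω = true ∧ Tstar ω = t' ∧ Z ω = z ∧ V ω = v}, Y ω ∂P)
        = cExp P Y {ω | Tstar ω = t' ∧ Z ω = z ∧ V ω = v}
            * (P {ω | T ω = true ∧ Tstar ω = t' ∧ Z ω = z ∧ V ω = v}).toReal := by
      have h1 := ha true t' z v
      unfold cExp at h1 ⊢
      rw [← h1, div_mul_cancel₀ _ hpB]
    refine ⟨?_, ?_, ?_⟩
    · rw [heb, hcPr1]; field_simp
    · rw [hcPrd, hcPr1]; field_simp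
    · rw [← hb t' z v, hcPrd, hcPr1, hintB]
      field_simp
  -- integrability
  have hInt : ∀ s : Set Ω, IntegrableOn Y s P := fun s => hYint.integrableOn
  -- splitting the integrals / measures
  have hmeasS : (P {ω | Z ω = z ∧ V ω = v}).toReal
      = (P {ω | Tstar ω = true ∧ Z ω = z ∧ V ω = v}).toReal
        + (P {ω | Tstar ω = false ∧ Z ω = z ∧ V ω = v}).toReal := by
    rw [hSA, measure_union hdisjA (mA false),
      ENNReal.toReal_add (measure_ne_top P _) (measure_ne_top P _)]
  have hintS : (∫ ω in {ω | Z ω = z ∧ V ω = v}, Y ω ∂P)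
      = (∫ ω in {ω | Tstar ω = true ∧ Z ω = z ∧ V ω = v}, Y ω ∂P)
        + (∫ ω in {ω | Tstar ω = false ∧ Z ω = z ∧ V ω = v}, Y ω ∂P) := by
    rw [hSA]
    exact setIntegral_union hdisjA (mA false) (hInt _) (hInt _)
  have hmeasST : (P ({ω | Z ω = z ∧ V ω = v} ∩ {ω | T ω = true})).toReal
      = (P {ω | T ω = true ∧ Tstar ω = true ∧ Z ω = z ∧ V ω = v}).toReal
        + (P {ω | T ω = true ∧ Tstar ω = false ∧ Z ω = z ∧ V ω = v}).toReal := by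
    rw [hScapT, measure_union hdisjB (mB false),
      ENNReal.toReal_add (measure_ne_top P _) (measure_ne_top P _)]
  have hintST : (∫ ω in {ω | Z ω = z ∧ V ω = v} ∩ {ω | T ω = true}, Y ω ∂P)
      = (∫ ω in {ω | T ω = true ∧ Tstar ω = true ∧ Z ω = z ∧ V ω = v}, Y ω ∂P)
        + (∫ ω in {ω | T ω = true ∧ Tstar ω = false ∧ Z ω = z ∧ V ω = v}, Y ω ∂P) := by
    rw [hScapT]
    exact setIntegral_union hdisjB (mB false) (hInt _) (hInt _)
  -- indicator rewrites
  have hb2r : ∀ ω, b2r (T ω) = Set.indicator {ω | T ω = true} (fun _ => (1:ℝ)) ω := by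
    intro ω
    by_cases h : T ω = true <;> simp [b2r, Set.indicator, Set.mem_setOf_eq, h]
  have hYb2r : ∀ ω, Y ω * b2r (T ω) = Set.indicator {ω | T ω = true} Y ω := by
    intro ω
    by_cases h : T ω = true <;> simp [b2r, Set.indicator, Set.mem_setOf_eq, h]
  refine ⟨?_, ?_, ?_⟩
  · rw [Fintype.sum_bool, (hterm true).1, (hterm false).1]
    unfold cExp
    rw [hintS, ← add_div]
  · rw [Fintype.sum_bool, (hterm true).2.1, (hterm false).2.1]
    unfold cExp
    have : (∫ ω in {ω | Z ω = z ∧ V ω = v}, b2r (T ω) ∂P)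
        = (P ({ω | Z ω = z ∧ V ω = v} ∩ {ω | T ω = true})).toReal := by
      rw [integral_congr_ae (Filter.Eventually.of_forall fun ω => hb2r ω),
        setIntegral_indicator mTT, setIntegral_const, smul_eq_mul, mul_one, measureReal_def]
    rw [this, hmeasST, ← add_div]
  · rw [Fintype.sum_bool, (hterm true).2.2, (hterm false).2.2]
    unfold cExp
    have : (∫ ω in {ω | Z ω = z ∧ V ω = v}, Y ω * b2r (T ω) ∂P)
        = (∫ ω in {ω | Z ω = z ∧ V ω = v} ∩ {ω | T ω = true}, Y ω ∂P) := by
      rw [integral_congr_ae (Filter.Eventually.of_forall fun ω => hYb2r ω),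
        setIntegral_indicator mTT]
    rw [this, hintST, ← add_div]
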